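/- arXiv:1306.4164 — 2 statements merged into one kernel-verified Lean document; each statement's English description precedes it below -/
import Mathlib

section
/- The additively weighted Harary index of the cycle-path graph CP_{3,n−3} equals 4·∑_{i=1}^{n−2} H_{n−i−1} + H_{n−3} + 3·H_{n−2} + (6n−13)/(n−2) for every integer n ≥ 4, where H_k denotes the k-th harmonic number. -/
open Finset SimpleGraph

/-- Degree of a vertex (number of neighbors). -/
noncomputable def deg {V : Type*} [Fintype V] (G : SimpleGraph V) (v : V) : ℕ :=
  Nat.card {w // G.Adj v w}

open scoped Classical in
/-- Additively weighted Harary index: sum over unordered pairs of distinct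
vertices of (deg u + deg v) / d(u,v). -/
noncomputable def HA {V : Type*} [Fintype V] (G : SimpleGraph V) : ℝ :=
  (1/2) * ∑ u : V, ∑ v : V, if u = v then 0 else
    ((deg G u + deg G v : ℕ) : ℝ) / (G.dist u v)

/-- A unicyclic graph: connected with as many edges as vertices. -/
def Unicyclic {V : Type*} [Fintype V] (G : SimpleGraph V) : Prop :=
  G.Connected ∧ Nat.card G.edgeSet = Fintype.card V

/-- k-th harmonicNum number. -/
noncomputable def harmonicNum (k : ℕ) : ℝ := ∑ i ∈ Finset.range k, (1 : ℝ) / (i + 1)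

/-- CS_{3,n-3}: a triangle on vertices 0,1,2 with n-3 leaves attached to vertex 0. -/
def cycleStar3 (n : ℕ) : SimpleGraph (Fin n) :=
  SimpleGraph.fromRel (fun i j => ((i : ℕ) < 3 ∧ (j : ℕ) < 3) ∨ ((i : ℕ) = 0 ∧ 3 ≤ (j : ℕ)))

/-- CP_{k,n-k}: cycle 0,...,k-1 with the path k,k+1,...,n-1 attached to vertex 0
(for k = n this is just the cycle C_n). -/
def cyclePath (n k : ℕ) : SimpleGraph (Fin n) :=
  SimpleGraph.fromRel (fun i j =>
    ((i : ℕ) < k ∧ (j : ℕ) < k ∧ ((j : ℕ) = (i : ℕ) + 1 ∨ ((i : ℕ) = 0 ∧ (j : ℕ) = k - 1)))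
    ∨ ((i : ℕ) = 0 ∧ (j : ℕ) = k)
    ∨ (k ≤ (i : ℕ) ∧ (j : ℕ) = (i : ℕ) + 1))

/-- A vertex lies on a cycle of G. -/
def OnCycle {V : Type*} (G : SimpleGraph V) (v : V) : Prop :=
  ∃ p : G.Walk v v, p.IsCycle

/-- Cycle-star graph: unicyclic, and every vertex of degree ≥ 2 lies on the cycle
(equivalently, every non-cycle vertex is a leaf attached to a cycle vertex). -/
def IsCycleStar {V : Type*} [Fintype V] (G : SimpleGraph V) : Prop :=
  Unicyclic G ∧ ∀ v, 2 ≤ deg G v → OnCycle G v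

/-- Cycle-path graph: unicyclic, cycle vertices have degree ≤ 3 and non-cycle
vertices have degree ≤ 2 (at most one pendant path per cycle vertex). -/
def IsCyclePath {V : Type*} [Fintype V] (G : SimpleGraph V) : Prop :=
  Unicyclic G ∧ ∀ v, (OnCycle G v → deg G v ≤ 3) ∧ (¬ OnCycle G v → deg G v ≤ 2)

/-- Length of the unique cycle of a unicyclic graph: number of vertices on a cycle. -/
noncomputable def cycleLength {V : Type*} [Fintype V] (G : SimpleGraph V) : ℕ :=
  Nat.card {v // OnCycle G v}

/-- Value of H_A(CP_{3,n-3}). -/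
noncomputable def CPval (n : ℕ) : ℝ :=
  4 * ∑ i ∈ Finset.range (n - 2), harmonicNum (n - i - 2)
    + harmonicNum (n - 3) + 3 * harmonicNum (n - 2) + (6 * (n : ℝ) - 13) / ((n : ℝ) - 2)

lemma adj_iff {n : ℕ} (u v : Fin n) :
    (cyclePath n 3).Adj u v ↔ (u : ℕ) ≠ (v : ℕ) ∧
      ((((u:ℕ) < 3 ∧ (v:ℕ) < 3 ∧ ((v:ℕ) = (u:ℕ)+1 ∨ ((u:ℕ) = 0 ∧ (v:ℕ) = 2))) ∨
        ((u:ℕ) = 0 ∧ (v:ℕ) = 3) ∨ (3 ≤ (u:ℕ) ∧ (v:ℕ) = (u:ℕ)+1)) ∨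
       (((v:ℕ) < 3 ∧ (u:ℕ) < 3 ∧ ((u:ℕ) = (v:ℕ)+1 ∨ ((v:ℕ) = 0 ∧ (u:ℕ) = 2))) ∨
        ((v:ℕ) = 0 ∧ (u:ℕ) = 3) ∨ (3 ≤ (v:ℕ) ∧ (u:ℕ) = (v:ℕ)+1))) := by
  simp [cyclePath, SimpleGraph.fromRel_adj, Fin.ext_iff, Ne]

def dgn (n u : ℕ) : ℕ := if u = 0 then 3 else if u = n - 1 then 1 else 2

open scoped Classical in
lemma deg_card {V : Type*} [Fintype V] (G : SimpleGraph V) (v : V) :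
    deg G v = (Finset.univ.filter (G.Adj v)).card := by
  rw [deg, Nat.card_eq_fintype_card, Fintype.card_subtype]

lemma deg_eq {n : ℕ} (hn : 4 ≤ n) (v : Fin n) :
    deg (cyclePath n 3) v = dgn n (v : ℕ) := by
  classical
  rw [deg_card]
  have hv := v.isLt
  rcases Nat.lt_or_ge (v : ℕ) 1 with h0 | h0'
  · -- v = 0
    have hS : Finset.univ.filter ((cyclePath n 3).Adj v) =
        {(⟨1, by omega⟩ : Fin n), ⟨2, by omega⟩, ⟨3, by omega⟩} := by
      ext w
      simp only [Finset.mem_filter, Finset.mem_univ, true_and, adj_iff,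
        Finset.mem_insert, Finset.mem_singleton, Fin.ext_iff]
      omega
    rw [hS, dgn]
    rw [Finset.card_eq_three.mpr ⟨_, _, _, by simp [Fin.ext_iff], by simp [Fin.ext_iff],
      by simp [Fin.ext_iff], rfl⟩]
    simp only [if_pos (by omega : (v:ℕ) = 0)]
  · rcases Nat.lt_or_ge (v : ℕ) 2 with h1 | h1'
    · -- v = 1
      have hS : Finset.univ.filter ((cyclePath n 3).Adj v) =
          {(⟨0, by omega⟩ : Fin n), ⟨2, by omega⟩} := by
        ext w
        simp only [Finset.mem_filter, Finset.mem_univ, true_and, adj_iff,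
          Finset.mem_insert, Finset.mem_singleton, Fin.ext_iff]
        omega
      rw [hS, Finset.card_pair (by simp [Fin.ext_iff]), dgn]
      rw [if_neg (by omega), if_neg (by omega)]
    · rcases Nat.lt_or_ge (v : ℕ) 3 with h2 | h3
      · -- v = 2
        have hS : Finset.univ.filter ((cyclePath n 3).Adj v) =
            {(⟨0, by omega⟩ : Fin n), ⟨1, by omega⟩} := by
          ext w
          simp only [Finset.mem_filter, Finset.mem_univ, true_and, adj_iff,
            Finset.mem_insert, Finset.mem_singleton, Fin.ext_iff]
          omega
        rw [hS, Finset.card_pair (by simp [Fin.ext_iff]), dgn]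
        rw [if_neg (by omega), if_neg (by omega)]
      · rcases Nat.lt_or_ge (v : ℕ) (n - 1) with hlt | hge
        · -- 3 ≤ v < n - 1
          rcases Nat.lt_or_ge (v : ℕ) 4 with h34 | h4
          · -- v = 3
            have hS : Finset.univ.filter ((cyclePath n 3).Adj v) =
                {(⟨0, by omega⟩ : Fin n), ⟨4, by omega⟩} := by
              ext w
              simp only [Finset.mem_filter, Finset.mem_univ, true_and, adj_iff,
                Finset.mem_insert, Finset.mem_singleton, Fin.ext_iff]
              omega
            rw [hS, Finset.card_pair (by simp [Fin.ext_iff]), dgn]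
            rw [if_neg (by omega), if_neg (by omega)]
          · -- 4 ≤ v < n-1
            have hS : Finset.univ.filter ((cyclePath n 3).Adj v) =
                {(⟨(v:ℕ) - 1, by omega⟩ : Fin n), ⟨(v:ℕ) + 1, by omega⟩} := by
              ext w
              simp only [Finset.mem_filter, Finset.mem_univ, true_and, adj_iff,
                Finset.mem_insert, Finset.mem_singleton, Fin.ext_iff]
              omega
            rw [hS, Finset.card_pair (by simp only [ne_eq, Fin.ext_iff]; omega), dgn]
            rw [if_neg (by omega), if_neg (by omega)]
        · -- v = n - 1
          rcases Nat.lt_or_ge (v : ℕ) 4 with h34 | h4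
          · -- v = 3 = n-1
            have hS : Finset.univ.filter ((cyclePath n 3).Adj v) =
                {(⟨0, by omega⟩ : Fin n)} := by
              ext w
              simp only [Finset.mem_filter, Finset.mem_univ, true_and, adj_iff,
                Finset.mem_singleton, Fin.ext_iff]
              omega
            rw [hS, Finset.card_singleton, dgn]
            rw [if_neg (by omega), if_pos (by omega)]
          · have hS : Finset.univ.filter ((cyclePath n 3).Adj v) =
                {(⟨(v:ℕ) - 1, by omega⟩ : Fin n)} := by
              ext w
              simp only [Finset.mem_filter, Finset.mem_univ, true_and, adj_iff,
                Finset.mem_singleton, Fin.ext_iff]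
              omega
            rw [hS, Finset.card_singleton, dgn]
            rw [if_neg (by omega), if_pos (by omega)]

def ppz (u : ℕ) : ℤ := if u = 0 then 2 else if u < 3 then 1 else (u : ℤ)

def Dn (u v : ℕ) : ℕ := if u = v then 0 else max 1 (ppz u - ppz v).natAbs

lemma adj_of {n : ℕ} (a b : ℕ) (ha : a < n) (hb : b < n)
    (h : (a < 3 ∧ b < 3 ∧ (b = a+1 ∨ (a = 0 ∧ b = 2))) ∨ (a = 0 ∧ b = 3) ∨ (3 ≤ a ∧ b = a+1)) :
    (cyclePath n 3).Adj ⟨a, ha⟩ ⟨b, hb⟩ := by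
  rw [adj_iff]
  simp only [Fin.val_mk, true_and, and_true]
  omega

lemma reach_zero {n : ℕ} (hn : 4 ≤ n) (v : Fin n) :
    (cyclePath n 3).Reachable ⟨0, by omega⟩ v := by
  have hv := v.isLt
  have key : ∀ m (h3 : 3 ≤ m) (hm : m < n), (cyclePath n 3).Reachable ⟨0, by omega⟩ ⟨m, hm⟩ := by
    intro m h3
    induction m, h3 using Nat.le_induction with
    | base => intro hm; exact (adj_of 0 3 (by omega) hm (by omega)).reachable
    | succ m hm ih =>
      intro hm1
      exact (ih (by omega)).trans (adj_of m (m+1) (by omega) hm1 (by omega)).reachable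
  rcases Nat.lt_or_ge (v : ℕ) 3 with h | h
  · rcases Nat.eq_zero_or_pos (v : ℕ) with h0 | h0
    · have hv0 : (⟨0, by omega⟩ : Fin n) = v := Fin.ext (by simpa using h0.symm)
      rw [hv0]
    · have : (cyclePath n 3).Adj ⟨0, by omega⟩ v := by
        rw [adj_iff]
        simp only [Fin.val_mk, true_and, and_true]
        omega
      exact this.reachable
  · have := key (v : ℕ) h hv
    have hveq : (⟨(v : ℕ), hv⟩ : Fin n) = v := Fin.ext rfl
    rwa [hveq] at this

lemma cp_connected {n : ℕ} (hn : 4 ≤ n) : (cyclePath n 3).Connected := by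
  rw [SimpleGraph.connected_iff]
  refine ⟨fun u v => ((reach_zero hn u).symm.trans (reach_zero hn v)), ⟨⟨0, by omega⟩⟩⟩

lemma adj_lip {n : ℕ} {u v : Fin n} (h : (cyclePath n 3).Adj u v) :
    (ppz (u:ℕ) - ppz (v:ℕ)).natAbs ≤ 1 := by
  rw [adj_iff] at h
  unfold ppz
  split_ifs <;> omega

lemma walk_lip {n : ℕ} {u v : Fin n} (p : (cyclePath n 3).Walk u v) :
    (ppz (u:ℕ) - ppz (v:ℕ)).natAbs ≤ p.length := by
  induction p with
  | nil => simp
  | cons h q ih =>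
    have h1 := adj_lip h
    rw [SimpleGraph.Walk.length_cons]
    omega

lemma dist_lb {n : ℕ} (hn : 4 ≤ n) (u v : Fin n) :
    (ppz (u:ℕ) - ppz (v:ℕ)).natAbs ≤ (cyclePath n 3).dist u v := by
  obtain ⟨p, hp⟩ := ((cp_connected hn) u v).exists_walk_length_eq_dist
  rw [← hp]
  exact walk_lip p

lemma dist_path_le {n : ℕ} (a : ℕ) (h3 : 3 ≤ a) (ha : a < n) :
    ∀ b, a ≤ b → ∀ (hb : b < n),
      (cyclePath n 3).dist ⟨a, ha⟩ ⟨b, hb⟩ ≤ b - a := by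
  intro b hab
  induction b, hab using Nat.le_induction with
  | base => intro hb; simp [SimpleGraph.dist_self]
  | succ b hb ih =>
    intro hb1
    have hadj : (cyclePath n 3).Adj ⟨b, by omega⟩ ⟨b+1, hb1⟩ :=
      adj_of b (b+1) (by omega) hb1 (by omega)
    have h1 : (cyclePath n 3).dist ⟨b, by omega⟩ ⟨b+1, hb1⟩ = 1 :=
      SimpleGraph.dist_eq_one_iff_adj.mpr hadj
    have htri := (cp_connected (n := n) (by omega)).dist_triangle
      (u := (⟨a, ha⟩ : Fin n)) (v := ⟨b, by omega⟩) (w := ⟨b+1, hb1⟩)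
    have := ih (by omega)
    omega

lemma Dn_comm (u v : ℕ) : Dn u v = Dn v u := by
  unfold Dn
  by_cases h : u = v
  · subst h; simp
  · rw [if_neg h, if_neg (Ne.symm h)]
    omega

lemma dist_ub0 {n : ℕ} (hn : 4 ≤ n) (b : ℕ) (h3 : 3 ≤ b) (hb : b < n) :
    (cyclePath n 3).dist ⟨0, by omega⟩ ⟨b, hb⟩ ≤ b - 2 := by
  have h03 : (cyclePath n 3).dist ⟨0, by omega⟩ ⟨3, by omega⟩ = 1 :=
    SimpleGraph.dist_eq_one_iff_adj.mpr (adj_of 0 3 (by omega) (by omega) (by omega))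
  have hp := dist_path_le (n := n) 3 le_rfl (by omega) b h3 hb
  have tri := (cp_connected hn).dist_triangle
    (u := (⟨0, by omega⟩ : Fin n)) (v := ⟨3, by omega⟩) (w := ⟨b, hb⟩)
  omega

lemma dist_ub12 {n : ℕ} (hn : 4 ≤ n) (a b : ℕ) (ha : a = 1 ∨ a = 2) (h3 : 3 ≤ b) (hb : b < n) :
    (cyclePath n 3).dist ⟨a, by omega⟩ ⟨b, hb⟩ ≤ b - 1 := by
  have ha0 : (cyclePath n 3).dist ⟨a, by omega⟩ ⟨0, by omega⟩ = 1 :=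
    SimpleGraph.dist_eq_one_iff_adj.mpr
      ((adj_of 0 a (by omega) (by omega) (by omega)).symm)
  have h0b := dist_ub0 hn b h3 hb
  have tri := (cp_connected hn).dist_triangle
    (u := (⟨a, by omega⟩ : Fin n)) (v := ⟨0, by omega⟩) (w := ⟨b, hb⟩)
  omega

lemma dist_eq_aux {n : ℕ} (hn : 4 ≤ n) (u v : Fin n) (hle : (u : ℕ) ≤ (v : ℕ)) :
    (cyclePath n 3).dist u v = Dn (u : ℕ) (v : ℕ) := by
  rcases eq_or_lt_of_le hle with heq | hlt
  · have : u = v := Fin.ext heq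
    subst this
    simp [SimpleGraph.dist_self, Dn]
  have hne : u ≠ v := by intro h; subst h; omega
  have hlb := dist_lb hn u v
  have hpos := (cp_connected hn).pos_dist_of_ne hne
  have hv := v.isLt
  have hu := u.isLt
  rcases Nat.lt_or_ge (v : ℕ) 3 with hv3 | hv3
  · -- both in triangle: adjacent
    have hadj : (cyclePath n 3).Adj u v := by
      rw [adj_iff]
      omega
    rw [SimpleGraph.dist_eq_one_iff_adj.mpr hadj]
    unfold Dn ppz
    split_ifs <;> omega
  · rcases Nat.lt_or_ge (u : ℕ) 3 with hu3 | hu3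
    · -- u in triangle, v on path
      rcases Nat.eq_zero_or_pos (u : ℕ) with hu0 | hu0
      · have hub := dist_ub0 hn (v : ℕ) hv3 hv
        have h1 : (⟨0, by omega⟩ : Fin n) = u := Fin.ext (by simp [hu0])
        have h2 : (⟨(v:ℕ), hv⟩ : Fin n) = v := Fin.ext rfl
        rw [h1, h2] at hub
        have hD : Dn (u:ℕ) (v:ℕ) = (v:ℕ) - 2 := by
          unfold Dn ppz
          split_ifs <;> omega
        have hL : (ppz (u:ℕ) - ppz (v:ℕ)).natAbs = (v:ℕ) - 2 := by
          unfold ppz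
          split_ifs <;> omega
        omega
      · have hub := dist_ub12 hn (u:ℕ) (v:ℕ) (by omega) hv3 hv
        have h1 : (⟨(u:ℕ), by omega⟩ : Fin n) = u := Fin.ext rfl
        have h2 : (⟨(v:ℕ), hv⟩ : Fin n) = v := Fin.ext rfl
        rw [h1, h2] at hub
        have hD : Dn (u:ℕ) (v:ℕ) = (v:ℕ) - 1 := by
          unfold Dn ppz
          split_ifs <;> omega
        have hL : (ppz (u:ℕ) - ppz (v:ℕ)).natAbs = (v:ℕ) - 1 := by
          unfold ppz
          split_ifs <;> omega
        omega
    · -- both on path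
      have hub := dist_path_le (n := n) (u:ℕ) hu3 hu (v:ℕ) (by omega) hv
      have h1 : (⟨(u:ℕ), hu⟩ : Fin n) = u := Fin.ext rfl
      have h2 : (⟨(v:ℕ), hv⟩ : Fin n) = v := Fin.ext rfl
      rw [h1, h2] at hub
      have hD : Dn (u:ℕ) (v:ℕ) = (v:ℕ) - (u:ℕ) := by
        unfold Dn ppz
        split_ifs <;> omega
      have hL : (ppz (u:ℕ) - ppz (v:ℕ)).natAbs = (v:ℕ) - (u:ℕ) := by
        unfold ppz
        split_ifs <;> omega
      omega

lemma dist_eq {n : ℕ} (hn : 4 ≤ n) (u v : Fin n) :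
    (cyclePath n 3).dist u v = Dn (u : ℕ) (v : ℕ) := by
  rcases le_or_gt (u : ℕ) (v : ℕ) with hle | hlt
  · exact dist_eq_aux hn u v hle
  · rw [SimpleGraph.dist_comm, Dn_comm]
    exact dist_eq_aux hn v u (le_of_lt hlt)

noncomputable def tt (u v : ℕ) : ℝ := if u = v then 0 else 1 / (Dn u v : ℝ)

lemma tt_comm (u v : ℕ) : tt u v = tt v u := by
  unfold tt
  by_cases h : u = v
  · subst h; simp
  · rw [if_neg h, if_neg (Ne.symm h), Dn_comm]

lemma tt_of {u v d : ℕ} (h : u ≠ v) (hd : Dn u v = d) : tt u v = 1 / (d : ℝ) := by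
  rw [tt, if_neg h, hd]

lemma tt_path {a b : ℕ} (h3 : 3 ≤ b) (hba : b ≤ a) : tt a b = 1 / ((a - b : ℕ) : ℝ) := by
  by_cases h : a = b
  · subst h; simp [tt]
  · exact tt_of (by omega) (by unfold Dn ppz; split_ifs <;> omega)

lemma harm_succ (k : ℕ) : harmonicNum (k + 1) = harmonicNum k + 1 / ((k : ℝ) + 1) := by
  rw [harmonicNum, harmonicNum, Finset.sum_range_succ]

lemma sum_inv_reflect (m : ℕ) :
    ∑ i ∈ Finset.range m, (1 : ℝ) / ((m - i : ℕ) : ℝ) = harmonicNum m := by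
  rw [← Finset.sum_range_reflect (fun i => (1 : ℝ) / ((m - i : ℕ) : ℝ)) m, harmonicNum]
  refine Finset.sum_congr rfl fun i hi => ?_
  rw [Finset.mem_range] at hi
  have : m - (m - 1 - i) = i + 1 := by omega
  rw [this]
  push_cast
  ring

lemma sum_split (f : ℕ → ℝ) (m : ℕ) :
    ∑ v ∈ Finset.range (m + 4), f v
      = f 0 + f 1 + f 2 + ∑ i ∈ Finset.range (m + 1), f (3 + i) := by
  rw [show m + 4 = 3 + (m + 1) by omega, Finset.sum_range_add]
  simp [Finset.sum_range_succ]

lemma rowA (m : ℕ) :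
    ∑ v ∈ Finset.range (m + 4), tt 0 v = 2 + harmonicNum (m + 1) := by
  induction m with
  | zero => norm_num [Finset.sum_range_succ, tt, Dn, ppz, harmonicNum]
  | succ m ih =>
    have hh : harmonicNum (m + 1 + 1) = harmonicNum (m + 1) + 1 / ((m : ℝ) + 2) := by
      rw [harm_succ]; push_cast; ring
    have h4 : m + 1 + 4 = (m + 4) + 1 := by omega
    rw [h4, Finset.sum_range_succ, ih,
      tt_of (by omega : (0:ℕ) ≠ m + 4)
        (by unfold Dn ppz; split_ifs <;> first | omega | exact False.elim (by assumption)
          : Dn 0 (m+4) = m + 2),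
      hh]
    push_cast
    ring

lemma rowB (m : ℕ) :
    ∑ v ∈ Finset.range (m + 4), tt (m + 3) v
      = 1 / ((m : ℝ) + 1) + 2 / ((m : ℝ) + 2) + harmonicNum m := by
  rw [sum_split]
  rw [tt_of (by omega) (by unfold Dn ppz; split_ifs <;> first | omega | exact False.elim (by assumption) : Dn (m+3) 0 = m + 1),
      tt_of (by omega) (by unfold Dn ppz; split_ifs <;> first | omega | exact False.elim (by assumption) : Dn (m+3) 1 = m + 2),
      tt_of (by omega) (by unfold Dn ppz; split_ifs <;> first | omega | exact False.elim (by assumption) : Dn (m+3) 2 = m + 2)]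
  have htail : ∑ i ∈ Finset.range (m + 1), tt (m + 3) (3 + i)
      = ∑ i ∈ Finset.range (m + 1), (1 : ℝ) / ((m - i : ℕ) : ℝ) := by
    refine Finset.sum_congr rfl fun i hi => ?_
    rw [Finset.mem_range] at hi
    rw [tt_path (by omega) (by omega), show m + 3 - (3 + i) = m - i by omega]
  rw [htail, Finset.sum_range_succ, sum_inv_reflect]
  norm_num
  ring

lemma rowC (m : ℕ) :
    ∑ v ∈ Finset.range (m + 4), tt (m + 4) v
      = 1 / ((m : ℝ) + 2) + 2 / ((m : ℝ) + 3) + harmonicNum (m + 1) := by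
  rw [sum_split]
  rw [tt_of (by omega) (by unfold Dn ppz; split_ifs <;> first | omega | exact False.elim (by assumption) : Dn (m+4) 0 = m + 2),
      tt_of (by omega) (by unfold Dn ppz; split_ifs <;> first | omega | exact False.elim (by assumption) : Dn (m+4) 1 = m + 3),
      tt_of (by omega) (by unfold Dn ppz; split_ifs <;> first | omega | exact False.elim (by assumption) : Dn (m+4) 2 = m + 3)]
  have htail : ∑ i ∈ Finset.range (m + 1), tt (m + 4) (3 + i)
      = ∑ i ∈ Finset.range (m + 1), (1 : ℝ) / ((m + 1 - i : ℕ) : ℝ) := by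
    refine Finset.sum_congr rfl fun i hi => ?_
    rw [Finset.mem_range] at hi
    rw [tt_path (by omega) (by omega), show m + 4 - (3 + i) = m + 1 - i by omega]
  rw [htail, sum_inv_reflect]
  push_cast
  ring

lemma Tsum (m : ℕ) :
    ∑ u ∈ Finset.range (m + 4), ∑ v ∈ Finset.range (m + 4), tt u v
      = 2 * (1 + harmonicNum (m + 1) + 2 * harmonicNum (m + 2)
          + ∑ k ∈ Finset.range (m + 1), harmonicNum k) := by
  induction m with
  | zero =>
    norm_num [Finset.sum_range_succ, tt, Dn, ppz, harmonicNum]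
  | succ m ih =>
    have h4 : m + 1 + 4 = (m + 4) + 1 := by omega
    have hinner : ∀ u ∈ Finset.range (m + 4),
        ∑ v ∈ Finset.range (m + 4 + 1), tt u v
          = ∑ v ∈ Finset.range (m + 4), tt u v + tt (m + 4) u := by
      intro u _
      rw [Finset.sum_range_succ, tt_comm u (m + 4)]
    have hlast : ∑ v ∈ Finset.range (m + 4 + 1), tt (m + 4) v
        = 1 / ((m : ℝ) + 2) + 2 / ((m : ℝ) + 3) + harmonicNum (m + 1) := by
      rw [Finset.sum_range_succ, rowC]
      simp [tt]
    have hA : harmonicNum (m + 1 + 1) = harmonicNum (m + 1) + 1 / ((m : ℝ) + 2) := by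
      rw [harm_succ]; push_cast; ring
    have hB : harmonicNum (m + 1 + 2) = harmonicNum (m + 1) + 1 / ((m : ℝ) + 2) + 1 / ((m : ℝ) + 3) := by
      rw [show m + 1 + 2 = (m + 1 + 1) + 1 by omega, harm_succ, hA]
      push_cast; ring
    have hU : ∑ k ∈ Finset.range (m + 1 + 1), harmonicNum k
        = ∑ k ∈ Finset.range (m + 1), harmonicNum k + harmonicNum (m + 1) :=
      Finset.sum_range_succ _ _
    rw [h4, Finset.sum_range_succ, Finset.sum_congr rfl hinner, Finset.sum_add_distrib, ih,
      hlast, rowC, hU, hA, hB]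
    ring

lemma ptw (m u v : ℕ) :
    (if u = v then (0:ℝ) else ((dgn (m+4) u + dgn (m+4) v : ℕ) : ℝ) / (Dn u v : ℝ))
      = 4 * tt u v + (if u = 0 then tt u v else 0) + (if v = 0 then tt u v else 0)
        - (if u = m + 3 then tt u v else 0) - (if v = m + 3 then tt u v else 0) := by
  have hd : m + 4 - 1 = m + 3 := by omega
  unfold dgn tt
  rw [hd]
  by_cases h : u = v
  · subst h; simp
  · simp only [if_neg h]
    split_ifs <;> first | omega | (push_cast; ring)

lemma Ssum (m : ℕ) :
    ∑ u ∈ Finset.range (m + 4), ∑ v ∈ Finset.range (m + 4),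
        (if u = v then (0:ℝ) else ((dgn (m+4) u + dgn (m+4) v : ℕ) : ℝ) / (Dn u v : ℝ))
      = 4 * (2 * (1 + harmonicNum (m + 1) + 2 * harmonicNum (m + 2)
            + ∑ k ∈ Finset.range (m + 1), harmonicNum k))
        + 2 * (2 + harmonicNum (m + 1))
        - 2 * (1 / ((m : ℝ) + 1) + 2 / ((m : ℝ) + 2) + harmonicNum m) := by
  have h0mem : (0 : ℕ) ∈ Finset.range (m + 4) := by simp
  have h3mem : (m + 3 : ℕ) ∈ Finset.range (m + 4) := by simp
  have expand : ∀ u ∈ Finset.range (m + 4),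
      ∑ v ∈ Finset.range (m + 4),
        (if u = v then (0:ℝ) else ((dgn (m+4) u + dgn (m+4) v : ℕ) : ℝ) / (Dn u v : ℝ))
      = 4 * (∑ v ∈ Finset.range (m + 4), tt u v)
        + (if u = 0 then (∑ v ∈ Finset.range (m + 4), tt u v) else 0)
        + tt u 0
        - (if u = m + 3 then (∑ v ∈ Finset.range (m + 4), tt u v) else 0)
        - tt u (m + 3) := by
    intro u _
    rw [Finset.sum_congr rfl (fun v _ => ptw m u v)]
    rw [Finset.sum_sub_distrib, Finset.sum_sub_distrib, Finset.sum_add_distrib,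
      Finset.sum_add_distrib, ← Finset.mul_sum]
    rw [Finset.sum_ite_eq' (Finset.range (m+4)) 0 (fun v => tt u v), if_pos h0mem]
    rw [Finset.sum_ite_eq' (Finset.range (m+4)) (m+3) (fun v => tt u v), if_pos h3mem]
    congr 2
    · congr 1
      · by_cases h : u = 0 <;> simp [h]
    · by_cases h : u = m + 3 <;> simp [h]
  rw [Finset.sum_congr rfl expand]
  rw [Finset.sum_sub_distrib, Finset.sum_sub_distrib, Finset.sum_add_distrib,
    Finset.sum_add_distrib, ← Finset.mul_sum]
  rw [Finset.sum_ite_eq' (Finset.range (m+4)) 0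
      (fun u => ∑ v ∈ Finset.range (m + 4), tt u v), if_pos h0mem]
  rw [Finset.sum_ite_eq' (Finset.range (m+4)) (m+3)
      (fun u => ∑ v ∈ Finset.range (m + 4), tt u v), if_pos h3mem]
  have hc0 : ∑ u ∈ Finset.range (m + 4), tt u 0 = ∑ v ∈ Finset.range (m + 4), tt 0 v :=
    Finset.sum_congr rfl (fun u _ => tt_comm u 0)
  have hc3 : ∑ u ∈ Finset.range (m + 4), tt u (m+3) = ∑ v ∈ Finset.range (m + 4), tt (m+3) v :=
    Finset.sum_congr rfl (fun u _ => tt_comm u (m+3))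
  rw [hc0, hc3, Tsum, rowA, rowB]
  ring


theorem stmt3 (n : ℕ) (hn : 4 ≤ n) :
    HA (cyclePath n 3) =
      4 * ∑ i ∈ Finset.range (n - 2), harmonicNum (n - i - 2)
        + harmonicNum (n - 3) + 3 * harmonicNum (n - 2) + (6 * (n : ℝ) - 13) / ((n : ℝ) - 2) := by
  obtain ⟨m, rfl⟩ : ∃ m, n = m + 4 := ⟨n - 4, by omega⟩
  have hterm : ∀ (u v : Fin (m + 4)) (inst : Decidable (u = v)),
      (@ite ℝ (u = v) inst 0
        (((deg (cyclePath (m+4) 3) u + deg (cyclePath (m+4) 3) v : ℕ) : ℝ)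
          / ((cyclePath (m+4) 3).dist u v)))
      = (if (u:ℕ) = (v:ℕ) then (0:ℝ)
          else ((dgn (m+4) (u:ℕ) + dgn (m+4) (v:ℕ) : ℕ) : ℝ) / (Dn (u:ℕ) (v:ℕ) : ℝ)) := by
    intro u v inst
    by_cases h : u = v
    · rw [if_pos h, if_pos (by rw [h])]
    · rw [if_neg h, if_neg (fun hv => h (Fin.ext hv)),
        deg_eq (by omega) u, deg_eq (by omega) v, dist_eq (by omega) u v]
  rw [HA]
  simp only [hterm]
  have houter : ∑ u : Fin (m+4), ∑ v : Fin (m+4),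
      (if (u:ℕ) = (v:ℕ) then (0:ℝ)
        else ((dgn (m+4) (u:ℕ) + dgn (m+4) (v:ℕ) : ℕ) : ℝ) / (Dn (u:ℕ) (v:ℕ) : ℝ))
      = ∑ u ∈ Finset.range (m + 4), ∑ v ∈ Finset.range (m + 4),
          (if u = v then (0:ℝ) else ((dgn (m+4) u + dgn (m+4) v : ℕ) : ℝ) / (Dn u v : ℝ)) := by
    rw [← Fin.sum_univ_eq_sum_range (fun u => ∑ v ∈ Finset.range (m + 4),
      (if u = v then (0:ℝ) else ((dgn (m+4) u + dgn (m+4) v : ℕ) : ℝ) / (Dn u v : ℝ))) (m+4)]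
    refine Finset.sum_congr rfl fun u _ => ?_
    rw [← Fin.sum_univ_eq_sum_range (fun v =>
      (if (u:ℕ) = v then (0:ℝ)
        else ((dgn (m+4) (u:ℕ) + dgn (m+4) v : ℕ) : ℝ) / (Dn (u:ℕ) v : ℝ))) (m+4)]
  rw [houter, Ssum]

  -- now pure algebra on the RHS
  have e2 : m + 4 - 2 = m + 2 := by omega
  have e3 : m + 4 - 3 = m + 1 := by omega
  rw [e2, e3]
  have hRsum : ∑ i ∈ Finset.range (m + 2), harmonicNum (m + 4 - i - 2)
      = ∑ k ∈ Finset.range (m + 1), harmonicNum k + harmonicNum (m + 1) + harmonicNum (m + 2) := by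
    have step1 : ∑ i ∈ Finset.range (m + 2), harmonicNum (m + 4 - i - 2)
        = ∑ i ∈ Finset.range (m + 2), harmonicNum (i + 1) := by
      rw [← Finset.sum_range_reflect (fun i => harmonicNum (i + 1)) (m + 2)]
      refine Finset.sum_congr rfl fun i hi => ?_
      rw [Finset.mem_range] at hi
      congr 1
      omega
    rw [step1, Finset.sum_range_succ]
    have step2 : ∑ i ∈ Finset.range (m + 2), harmonicNum i
        = ∑ i ∈ Finset.range (m + 1), harmonicNum (i + 1) + harmonicNum 0 :=
      Finset.sum_range_succ' _ _
    have h0 : harmonicNum 0 = 0 := by simp [harmonicNum]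
    have step3 : ∑ i ∈ Finset.range (m + 1), harmonicNum (i + 1)
        = ∑ i ∈ Finset.range (m + 1), harmonicNum i + harmonicNum (m + 1) := by
      have := Finset.sum_range_succ (fun i => harmonicNum i) (m + 1)
      rw [step2, h0] at this
      linarith [this]
    rw [step3]
  have hH2 : harmonicNum (m + 2) = harmonicNum (m + 1) + 1 / ((m : ℝ) + 2) := by
    rw [show m + 2 = (m + 1) + 1 by omega, harm_succ]; push_cast; ring
  have hH1 : harmonicNum (m + 1) = harmonicNum m + 1 / ((m : ℝ) + 1) := by
    rw [harm_succ]
  have d2 : (m : ℝ) + 2 ≠ 0 := by positivity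
  have hd3 : (6 * ((m + 4 : ℕ) : ℝ) - 13) / (((m + 4 : ℕ) : ℝ) - 2)
      = 6 - 1 / ((m : ℝ) + 2) := by
    have h2 : ((m + 4 : ℕ) : ℝ) = (m : ℝ) + 4 := by push_cast; ring
    rw [h2, show (m : ℝ) + 4 - 2 = (m : ℝ) + 2 by ring]
    field_simp
    ring
  rw [hRsum, hH2, hH1, hd3]
  ring
end

section
/- For every cycle-star graph G on n vertices whose cycle has length c ≥ 4, there exists a cycle-star graph G′ on n vertices whose cycle has length 3 such that H_A(G) < H_A(G′). -/
open Finset SimpleGraph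

open scoped Classical

lemma list_head_ne_getLast {α} {l : List α} (h : l.Nodup) (hl : 2 ≤ l.length) :
    l.head? ≠ l.getLast? := by
  match l, hl with
  | a :: b :: t, _ =>
    have hmem : (b :: t).getLast (by simp) ∈ b :: t := List.getLast_mem _
    have hne : a ∉ b :: t := (List.nodup_cons.1 h).1
    rw [List.head?_cons, List.getLast?_eq_getLast (l := a :: b :: t) (by simp),
      List.getLast_cons (by simp : b :: t ≠ [])]
    intro hc
    rw [Option.some_inj] at hc
    rw [hc] at hne
    exact hne hmem

lemma two_le_deg_of_onCycle {V : Type*} [Fintype V] {G : SimpleGraph V} {v : V}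
    (h : OnCycle G v) : 2 ≤ deg G v := by
  obtain ⟨p, hp⟩ := h
  have hnil : ¬ p.Nil := hp.not_nil
  have hnil' : ¬ p.reverse.Nil := by
    simp only [SimpleGraph.Walk.nil_iff_length_eq, SimpleGraph.Walk.length_reverse]
    intro hc
    exact hnil (SimpleGraph.Walk.nil_iff_length_eq.2 hc)
  set x := p.getVert 1 with hxdef
  set y := p.reverse.getVert 1 with hydef
  have hx : G.Adj v x := p.adj_snd hnil
  have hy : G.Adj v y := p.reverse.adj_snd hnil'
  have hxy : x ≠ y := by
    intro hc
    have h1 : p.edges.head? = some s(v, x) := by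
      conv_lhs => rw [← p.cons_tail_eq hnil]
      simp [SimpleGraph.Walk.edges_cons]
      exact Or.inl rfl
    have h2 : p.edges.getLast? = some s(v, y) := by
      rw [← List.head?_reverse, ← SimpleGraph.Walk.edges_reverse]
      conv_lhs => rw [← p.reverse.cons_tail_eq hnil']
      simp [SimpleGraph.Walk.edges_cons]
      exact Or.inl (SimpleGraph.Walk.snd_reverse p).symm
    have hnd : p.edges.Nodup := hp.isCircuit.isTrail.edges_nodup
    have hlen : 2 ≤ p.edges.length := by
      rw [SimpleGraph.Walk.length_edges]
      have := hp.three_le_length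
      omega
    exact list_head_ne_getLast hnd hlen (by rw [h1, h2, hc])
  rw [deg, Nat.card_eq_fintype_card, Nat.succ_le_iff, Fintype.one_lt_card_iff]
  exact ⟨⟨x, hx⟩, ⟨y, hy⟩, by simpa using hxy⟩

lemma deg_eq_degree {V : Type*} [Fintype V] (G : SimpleGraph V) (v : V) :
    deg G v = G.degree v := by
  rw [deg, Nat.card_eq_fintype_card, ← SimpleGraph.card_neighborSet_eq_degree]
  exact Fintype.card_congr (Equiv.refl _)

lemma deg_eq_filter {V : Type*} [Fintype V] (G : SimpleGraph V) (v : V) :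
    deg G v = (Finset.univ.filter (fun w => G.Adj v w)).card := by
  rw [deg_eq_degree, SimpleGraph.degree, SimpleGraph.neighborFinset_eq_filter]

lemma sum_deg {V : Type*} [Fintype V] (G : SimpleGraph V) :
    ∑ v, deg G v = 2 * Nat.card G.edgeSet := by
  have h1 : ∀ v, deg G v = G.degree v := deg_eq_degree G
  rw [Finset.sum_congr rfl (fun v _ => h1 v), SimpleGraph.sum_degrees_eq_twice_card_edges]
  congr 1
  rw [Nat.card_coe_set_eq, Set.ncard_eq_toFinset_card']
  congr 1

lemma filter_adj_card_symm {V : Type*} [Fintype V] (G : SimpleGraph V) (v : V) :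
    (Finset.univ.filter (fun u => G.Adj u v)).card = deg G v := by
  rw [deg_eq_filter]
  congr 1
  ext u
  simp [SimpleGraph.adj_comm]

lemma sum_bound {n : ℕ} (G : SimpleGraph (Fin n)) :
    ∑ u : Fin n, ∑ v : Fin n, (if u = v then (0:ℝ) else
      ((deg G u + deg G v : ℕ) : ℝ)/2 + (if G.Adj u v then ((deg G u + deg G v : ℕ):ℝ)/2 else 0))
    = ((n:ℝ) - 1) * (∑ v, (deg G v : ℝ)) + ∑ v, (deg G v : ℝ)^2 := by
  have hsplit : ∀ u v : Fin n, (if u = v then (0:ℝ) else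
      ((deg G u + deg G v : ℕ) : ℝ)/2 + (if G.Adj u v then ((deg G u + deg G v : ℕ):ℝ)/2 else 0))
      = (((deg G u + deg G v : ℕ) : ℝ)/2 - (if u = v then ((deg G u + deg G v : ℕ):ℝ)/2 else 0))
        + (if G.Adj u v then ((deg G u:ℝ))/2 else 0) + (if G.Adj u v then ((deg G v:ℝ))/2 else 0) := by
    intro u v
    by_cases h : u = v
    · subst h
      simp [G.irrefl]
    · simp only [if_neg h]
      by_cases ha : G.Adj u v <;> simp [ha] <;> push_cast <;> ring
  rw [Finset.sum_congr rfl (fun u _ => Finset.sum_congr rfl (fun v _ => hsplit u v))]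
  have e1 : ∑ u : Fin n, ∑ v : Fin n, ((deg G u + deg G v : ℕ) : ℝ)/2
      = (n:ℝ) * ∑ v, (deg G v : ℝ) := by
    push_cast
    have h : ∀ u : Fin n, ∑ v : Fin n, ((deg G u:ℝ) + deg G v)/2
        = (n:ℝ) * (deg G u) / 2 + (∑ v, (deg G v : ℝ))/2 := by
      intro u
      simp only [add_div, Finset.sum_add_distrib, Finset.sum_const, Finset.card_univ,
        Fintype.card_fin, nsmul_eq_mul, ← Finset.sum_div]
      ring
    rw [Finset.sum_congr rfl (fun u _ => h u)]
    simp only [Finset.sum_add_distrib, Finset.sum_const, Finset.card_univ, Fintype.card_fin,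
      nsmul_eq_mul, ← Finset.sum_div, Finset.mul_sum]
    rw [← Finset.mul_sum]
    ring
  have e2 : ∑ u : Fin n, ∑ v : Fin n, (if u = v then ((deg G u + deg G v : ℕ):ℝ)/2 else 0)
      = ∑ v, (deg G v : ℝ) := by
    have : ∀ u : Fin n, ∑ v : Fin n, (if u = v then ((deg G u + deg G v : ℕ):ℝ)/2 else 0)
        = (deg G u : ℝ) := by
      intro u
      rw [Finset.sum_ite_eq _ u (fun v => ((deg G u + deg G v : ℕ):ℝ)/2)]
      simp only [Finset.mem_univ, if_true]
      push_cast
      ring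
    rw [Finset.sum_congr rfl (fun u _ => this u)]
  have e3 : ∑ u : Fin n, ∑ v : Fin n, (if G.Adj u v then ((deg G u:ℝ))/2 else 0)
      = (∑ v, (deg G v : ℝ)^2) / 2 := by
    have : ∀ u : Fin n, ∑ v : Fin n, (if G.Adj u v then ((deg G u:ℝ))/2 else 0)
        = (deg G u : ℝ)^2 / 2 := by
      intro u
      rw [← Finset.sum_filter, Finset.sum_const, nsmul_eq_mul, deg_eq_filter]
      ring
    rw [Finset.sum_congr rfl (fun u _ => this u), ← Finset.sum_div]
  have e4 : ∑ u : Fin n, ∑ v : Fin n, (if G.Adj u v then ((deg G v:ℝ))/2 else 0)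
      = (∑ v, (deg G v : ℝ)^2) / 2 := by
    rw [Finset.sum_comm]
    have : ∀ v : Fin n, ∑ u : Fin n, (if G.Adj u v then ((deg G v:ℝ))/2 else 0)
        = (deg G v : ℝ)^2 / 2 := by
      intro v
      rw [← Finset.sum_filter, Finset.sum_const, nsmul_eq_mul, filter_adj_card_symm]
      ring
    rw [Finset.sum_congr rfl (fun v _ => this v), ← Finset.sum_div]
  simp only [Finset.sum_add_distrib, Finset.sum_sub_distrib]
  rw [e1, e2, e3, e4]
  ring

lemma HA_eq {n : ℕ} (G : SimpleGraph (Fin n)) :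
    HA G = (1/2) * ∑ u : Fin n, ∑ v : Fin n,
      (if u = v then (0:ℝ) else ((deg G u + deg G v : ℕ):ℝ) / (G.dist u v)) := by
  rw [HA]
  congr 1
  refine Finset.sum_congr rfl fun u _ => Finset.sum_congr rfl fun v _ => ?_
  congr

lemma dist_two_le {n : ℕ} (G : SimpleGraph (Fin n)) (hconn : G.Connected)
    {u v : Fin n} (h : u ≠ v) (ha : ¬ G.Adj u v) : 2 ≤ G.dist u v := by
  have hp : 0 < G.dist u v := hconn.pos_dist_of_ne h
  rcases Nat.lt_or_ge (G.dist u v) 2 with h2 | h2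
  · have h1 : G.dist u v = 1 := by omega
    exact absurd (SimpleGraph.dist_eq_one_iff_adj.1 h1) ha
  · exact h2

lemma HA_le_of {n : ℕ} (G : SimpleGraph (Fin n)) (hconn : G.Connected)
    (hsum : ∑ v, (deg G v : ℝ) = 2 * n) :
    HA G ≤ (1/2) * (((n:ℝ) - 1) * (2*n) + ∑ v, (deg G v : ℝ)^2) := by
  rw [HA_eq]
  have key : ∀ u : Fin n, ∀ v : Fin n,
      (if u = v then (0:ℝ) else ((deg G u + deg G v : ℕ):ℝ) / (G.dist u v))
      ≤ (if u = v then (0:ℝ) else ((deg G u + deg G v:ℕ):ℝ)/2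
          + (if G.Adj u v then ((deg G u + deg G v:ℕ):ℝ)/2 else 0)) := by
    intro u v
    by_cases h : u = v
    · simp [h]
    · simp only [if_neg h]
      by_cases ha : G.Adj u v
      · rw [if_pos ha, (SimpleGraph.dist_eq_one_iff_adj).2 ha]
        simp
      · rw [if_neg ha, add_zero]
        have h1 : 2 ≤ G.dist u v := dist_two_le G hconn h ha
        have h2 : (2:ℝ) ≤ (G.dist u v : ℝ) := by exact_mod_cast h1
        gcongr
        all_goals positivity
  have hle := Finset.sum_le_sum (fun u (_ : u ∈ Finset.univ) =>
    Finset.sum_le_sum (fun v (_ : v ∈ Finset.univ) => key u v))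
  refine le_trans (mul_le_mul_of_nonneg_left hle (by norm_num)) (le_of_eq ?_)
  rw [sum_bound G, hsum]

lemma HA_ge_of {n : ℕ} (G : SimpleGraph (Fin n)) (hconn : G.Connected)
    (hsum : ∑ v, (deg G v : ℝ) = 2 * n)
    (hdist : ∀ u v : Fin n, u ≠ v → G.dist u v ≤ 2) :
    (1/2) * (((n:ℝ) - 1) * (2*n) + ∑ v, (deg G v : ℝ)^2) ≤ HA G := by
  rw [HA_eq]
  have key : ∀ u : Fin n, ∀ v : Fin n,
      (if u = v then (0:ℝ) else ((deg G u + deg G v:ℕ):ℝ)/2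
          + (if G.Adj u v then ((deg G u + deg G v:ℕ):ℝ)/2 else 0))
      ≤ (if u = v then (0:ℝ) else ((deg G u + deg G v : ℕ):ℝ) / (G.dist u v)) := by
    intro u v
    by_cases h : u = v
    · simp [h]
    · simp only [if_neg h]
      by_cases ha : G.Adj u v
      · rw [if_pos ha, (SimpleGraph.dist_eq_one_iff_adj).2 ha]
        simp
      · rw [if_neg ha, add_zero]
        have h1 : G.dist u v = 2 := le_antisymm (hdist u v h) (dist_two_le G hconn h ha)
        rw [h1]
        norm_num
  have hle := Finset.sum_le_sum (fun u (_ : u ∈ Finset.univ) =>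
    Finset.sum_le_sum (fun v (_ : v ∈ Finset.univ) => key u v))
  refine le_trans (le_of_eq ?_) (mul_le_mul_of_nonneg_left hle (by norm_num))
  rw [sum_bound G, hsum]

lemma deg_eq_filter' {V : Type*} [Fintype V] (G : SimpleGraph V) (v : V) :
    deg G v = (Finset.univ.filter (fun w => G.Adj v w)).card := by
  rw [deg, Nat.card_eq_fintype_card]
  rw [Fintype.card_subtype]

lemma cs3_adj {n : ℕ} (u v : Fin n) :
    (cycleStar3 n).Adj u v ↔ u ≠ v ∧ ((u:ℕ) = 0 ∨ (v:ℕ) = 0 ∨ ((u:ℕ) < 3 ∧ (v:ℕ) < 3)) := by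
  rw [cycleStar3, SimpleGraph.fromRel_adj]
  constructor
  · rintro ⟨h1, h2⟩
    refine ⟨h1, ?_⟩
    omega
  · rintro ⟨h1, h2⟩
    refine ⟨h1, ?_⟩
    have : (u:ℕ) ≠ (v:ℕ) := fun hc => h1 (Fin.ext hc)
    omega

lemma cs3_deg {n : ℕ} (hn : 4 ≤ n) (v : Fin n) :
    deg (cycleStar3 n) v = if (v:ℕ) = 0 then n - 1 else if (v:ℕ) < 3 then 2 else 1 := by
  rw [deg_eq_filter']
  by_cases h0 : (v:ℕ) = 0
  · rw [if_pos h0]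
    have : Finset.univ.filter (fun w => (cycleStar3 n).Adj v w) = Finset.univ.erase v := by
      ext w
      simp only [Finset.mem_filter, Finset.mem_univ, true_and, Finset.mem_erase, cs3_adj]
      constructor
      · rintro ⟨h1, _⟩; exact ⟨fun hc => h1 hc.symm, trivial⟩
      · rintro ⟨h1, _⟩; exact ⟨fun hc => h1 hc.symm, Or.inl h0⟩
    rw [this, Finset.card_erase_of_mem (Finset.mem_univ v), Finset.card_univ, Fintype.card_fin]
  · rw [if_neg h0]
    by_cases h3 : (v:ℕ) < 3
    · rw [if_pos h3]
      have hv12 : (v:ℕ) = 1 ∨ (v:ℕ) = 2 := by omega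
      have : Finset.univ.filter (fun w => (cycleStar3 n).Adj v w)
          = {(⟨0, by omega⟩ : Fin n), (⟨3 - (v:ℕ), by omega⟩ : Fin n)} := by
        ext w
        simp only [Finset.mem_filter, Finset.mem_univ, true_and, cs3_adj, Finset.mem_insert,
          Finset.mem_singleton, Fin.ext_iff, Ne]
        constructor
        · rintro ⟨h1, h2⟩
          omega
        · intro h
          exact ⟨by omega, by omega⟩
      rw [this, Finset.card_insert_of_notMem (by simp [Fin.ext_iff]; omega),
        Finset.card_singleton]
    · rw [if_neg h3]
      have : Finset.univ.filter (fun w => (cycleStar3 n).Adj v w)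
          = {(⟨0, by omega⟩ : Fin n)} := by
        ext w
        simp only [Finset.mem_filter, Finset.mem_univ, true_and, cs3_adj,
          Finset.mem_singleton, Fin.ext_iff, Ne]
        constructor
        · rintro ⟨h1, h2⟩
          omega
        · intro h
          exact ⟨by omega, by omega⟩
      rw [this, Finset.card_singleton]

lemma sum_ite_zero_fin {n : ℕ} (hn : 4 ≤ n) (c : ℝ) :
    ∑ v : Fin n, (if (v:ℕ) = 0 then c else 0) = c := by
  have h : ∀ v : Fin n, (if (v:ℕ) = 0 then c else 0) = (if v = ⟨0, by omega⟩ then c else 0) := by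
    intro v
    congr 1
    simp [Fin.ext_iff]
  rw [Finset.sum_congr rfl (fun v _ => h v), Finset.sum_ite_eq' Finset.univ _ (fun _ => c)]
  simp

lemma sum_ite_12_fin {n : ℕ} (hn : 4 ≤ n) (c : ℝ) :
    ∑ v : Fin n, (if 1 ≤ (v:ℕ) ∧ (v:ℕ) < 3 then c else 0) = 2 * c := by
  rw [← Finset.sum_filter]
  have h : Finset.univ.filter (fun v : Fin n => 1 ≤ (v:ℕ) ∧ (v:ℕ) < 3)
      = {(⟨1, by omega⟩ : Fin n), (⟨2, by omega⟩ : Fin n)} := by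
    ext w
    simp only [Finset.mem_filter, Finset.mem_univ, true_and, Finset.mem_insert,
      Finset.mem_singleton, Fin.ext_iff]
    omega
  rw [h, Finset.sum_insert (by simp [Fin.ext_iff]), Finset.sum_singleton]
  ring

lemma cs3_sum_deg {n : ℕ} (hn : 4 ≤ n) :
    ∑ v, (deg (cycleStar3 n) v : ℝ) = 2 * n := by
  have hv : ∀ v : Fin n, (deg (cycleStar3 n) v : ℝ)
      = 1 + (if (v:ℕ) = 0 then (n:ℝ) - 2 else 0) + (if 1 ≤ (v:ℕ) ∧ (v:ℕ) < 3 then 1 else 0) := by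
    intro v
    rw [cs3_deg hn]
    split_ifs with h1 h2 h3 <;> first
      | (omega)
      | (push_cast [Nat.cast_sub (by omega : 1 ≤ n)]; ring)
      | (norm_num)
  rw [Finset.sum_congr rfl (fun v _ => hv v)]
  rw [Finset.sum_add_distrib, Finset.sum_add_distrib, sum_ite_zero_fin hn, sum_ite_12_fin hn]
  simp [Finset.card_univ]
  ring

lemma cs3_sum_deg_sq {n : ℕ} (hn : 4 ≤ n) :
    ∑ v, (deg (cycleStar3 n) v : ℝ)^2 = (n:ℝ)^2 - n + 6 := by
  have hv : ∀ v : Fin n, (deg (cycleStar3 n) v : ℝ)^2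
      = 1 + (if (v:ℕ) = 0 then (n:ℝ)^2 - 2*n else 0) + (if 1 ≤ (v:ℕ) ∧ (v:ℕ) < 3 then 3 else 0) := by
    intro v
    rw [cs3_deg hn]
    split_ifs with h1 h2 h3 <;> first
      | (omega)
      | (push_cast [Nat.cast_sub (by omega : 1 ≤ n)]; ring)
      | (norm_num)
  rw [Finset.sum_congr rfl (fun v _ => hv v)]
  rw [Finset.sum_add_distrib, Finset.sum_add_distrib, sum_ite_zero_fin hn, sum_ite_12_fin hn]
  simp [Finset.card_univ]
  ring

lemma cs3_connected {n : ℕ} (hn : 4 ≤ n) : (cycleStar3 n).Connected := by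
  have hne : (0:ℕ) < n := by omega
  set a0 : Fin n := ⟨0, hne⟩ with ha0
  have hadj0 : ∀ v : Fin n, v ≠ a0 → (cycleStar3 n).Adj a0 v := by
    intro v hv
    rw [cs3_adj]
    exact ⟨fun hc => hv hc.symm, Or.inl rfl⟩
  have hreach : ∀ v : Fin n, (cycleStar3 n).Reachable v a0 := by
    intro v
    by_cases h : v = a0
    · exact h ▸ SimpleGraph.Reachable.refl _
    · exact ((hadj0 v h).symm).reachable
  rw [SimpleGraph.connected_iff]
  refine ⟨fun u v => (hreach u).trans (hreach v).symm, ⟨a0⟩⟩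

lemma cs3_dist_le_two {n : ℕ} (hn : 4 ≤ n) (u v : Fin n) (huv : u ≠ v) :
    (cycleStar3 n).dist u v ≤ 2 := by
  have hne : (0:ℕ) < n := by omega
  set a0 : Fin n := ⟨0, hne⟩ with ha0
  by_cases ha : (cycleStar3 n).Adj u v
  · rw [SimpleGraph.dist_eq_one_iff_adj.2 ha]; omega
  · have hu0 : u ≠ a0 := by
      intro hc
      exact ha (by rw [cs3_adj]; exact ⟨huv, Or.inl (by rw [hc])⟩)
    have hv0 : v ≠ a0 := by
      intro hc
      exact ha (by rw [cs3_adj]; exact ⟨huv, Or.inr (Or.inl (by rw [hc]))⟩)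
    have h1 : (cycleStar3 n).Adj u a0 := by
      rw [cs3_adj]; exact ⟨hu0, Or.inr (Or.inl rfl)⟩
    have h2 : (cycleStar3 n).Adj a0 v := by
      rw [cs3_adj]; exact ⟨fun hc => hv0 hc.symm, Or.inl rfl⟩
    have hd := SimpleGraph.dist_le
      (SimpleGraph.Walk.cons h1 (SimpleGraph.Walk.cons h2 SimpleGraph.Walk.nil))
    simpa using hd

lemma cs3_triangle {n : ℕ} (hn : 4 ≤ n) :
    ∃ p : (cycleStar3 n).Walk ⟨0, by omega⟩ ⟨0, by omega⟩,
      p.IsCycle ∧ ∀ w : Fin n, (w:ℕ) < 3 → w ∈ p.support := by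
  set a0 : Fin n := ⟨0, by omega⟩
  set a1 : Fin n := ⟨1, by omega⟩
  set a2 : Fin n := ⟨2, by omega⟩
  have h01 : (cycleStar3 n).Adj a0 a1 := by rw [cs3_adj]; exact ⟨by simp [a0, a1, Fin.ext_iff], Or.inl rfl⟩
  have h12 : (cycleStar3 n).Adj a1 a2 := by
    rw [cs3_adj]; exact ⟨by simp [a1, a2, Fin.ext_iff], Or.inr (Or.inr ⟨by simp [a1], by simp [a2]⟩)⟩
  have h20 : (cycleStar3 n).Adj a2 a0 := by
    rw [cs3_adj]; exact ⟨by simp [a2, a0, Fin.ext_iff], Or.inr (Or.inl rfl)⟩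
  refine ⟨SimpleGraph.Walk.cons h01 (SimpleGraph.Walk.cons h12
    (SimpleGraph.Walk.cons h20 SimpleGraph.Walk.nil)), ?_, ?_⟩
  swap
  · intro w hw
    simp only [SimpleGraph.Walk.support_cons, SimpleGraph.Walk.support_nil, List.mem_cons,
      List.not_mem_nil, or_false, List.mem_singleton]
    have : (w:ℕ) = 0 ∨ (w:ℕ) = 1 ∨ (w:ℕ) = 2 := by omega
    rcases this with h | h | h
    · exact Or.inl (Fin.ext h)
    · exact Or.inr (Or.inl (Fin.ext h))
    · exact Or.inr (Or.inr (Or.inl (Fin.ext h)))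
  rw [SimpleGraph.Walk.isCycle_def]
  refine ⟨?_, by simp, ?_⟩
  · constructor
    simp only [SimpleGraph.Walk.edges_cons, SimpleGraph.Walk.edges_nil, List.nodup_cons,
      List.mem_cons, List.not_mem_nil, or_false, List.mem_singleton, List.nodup_nil, and_true]
    refine ⟨?_, ?_⟩
    · intro hc
      rcases hc with hc | hc <;> rw [Sym2.eq_iff] at hc <;>
        rcases hc with ⟨hc1, hc2⟩ | ⟨hc1, hc2⟩ <;> simp [a0, a1, a2, Fin.ext_iff] at hc1 hc2
    · refine ⟨?_, not_false⟩
      intro hc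
      rw [Sym2.eq_iff] at hc
      rcases hc with ⟨hc1, hc2⟩ | ⟨hc1, hc2⟩ <;> simp [a0, a1, a2, Fin.ext_iff] at hc1 hc2
  · simp only [SimpleGraph.Walk.support_cons, SimpleGraph.Walk.support_nil, List.tail_cons,
      List.nodup_cons, List.mem_cons, List.not_mem_nil, or_false, List.mem_singleton,
      List.nodup_nil, and_true]
    refine ⟨?_, ?_⟩
    · intro hc
      rcases hc with hc | hc <;> simp [a0, a1, a2, Fin.ext_iff] at hc
    · refine ⟨?_, not_false⟩
      intro hc
      simp [a0, a2, Fin.ext_iff] at hc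

lemma cs3_onCycle_iff {n : ℕ} (hn : 4 ≤ n) (v : Fin n) :
    OnCycle (cycleStar3 n) v ↔ (v:ℕ) < 3 := by
  constructor
  · intro h
    by_contra h3
    have hd := two_le_deg_of_onCycle h
    rw [cs3_deg hn] at hd
    rw [if_neg (by omega), if_neg (by omega)] at hd
    omega
  · intro h3
    obtain ⟨p, hp, hsup⟩ := cs3_triangle hn
    exact ⟨p.rotate v (hsup v h3), hp.rotate (hsup v h3)⟩

lemma cs3_edges {n : ℕ} (hn : 4 ≤ n) : Nat.card (cycleStar3 n).edgeSet = n := by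
  have h := sum_deg (cycleStar3 n)
  have h2 : ((∑ v, deg (cycleStar3 n) v : ℕ) : ℝ) = 2 * n := by
    push_cast
    exact cs3_sum_deg hn
  rw [h] at h2
  push_cast at h2
  have : (Nat.card (cycleStar3 n).edgeSet : ℝ) = (n : ℝ) := by linarith
  exact_mod_cast this

lemma cs3_cycleLength {n : ℕ} (hn : 4 ≤ n) : cycleLength (cycleStar3 n) = 3 := by
  rw [cycleLength]
  rw [Nat.card_congr (Equiv.subtypeEquivRight (cs3_onCycle_iff hn))]
  rw [Nat.card_eq_fintype_card, Fintype.card_subtype]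
  have : Finset.univ.filter (fun v : Fin n => (v:ℕ) < 3)
      = {(⟨0, by omega⟩ : Fin n), (⟨1, by omega⟩ : Fin n), (⟨2, by omega⟩ : Fin n)} := by
    ext w
    simp only [Finset.mem_filter, Finset.mem_univ, true_and, Finset.mem_insert,
      Finset.mem_singleton, Fin.ext_iff]
    omega
  rw [this]
  rw [Finset.card_insert_of_notMem (by simp [Fin.ext_iff]),
    Finset.card_insert_of_notMem (by simp [Fin.ext_iff]), Finset.card_singleton]

lemma cs3_isCycleStar {n : ℕ} (hn : 4 ≤ n) : IsCycleStar (cycleStar3 n) := by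
  refine ⟨⟨cs3_connected hn, by rw [cs3_edges hn, Fintype.card_fin]⟩, ?_⟩
  intro v hv
  rw [cs3_onCycle_iff hn]
  by_contra h3
  rw [cs3_deg hn, if_neg (by omega), if_neg (by omega)] at hv
  omega

lemma sq_sum_le {ι : Type*} (s : Finset ι) (f : ι → ℕ) :
    ∑ i ∈ s, (f i)^2 ≤ (∑ i ∈ s, f i)^2 := by
  have h : ∀ i ∈ s, (f i)^2 ≤ f i * ∑ j ∈ s, f j := by
    intro i hi
    rw [pow_two]
    exact Nat.mul_le_mul_left _ (Finset.single_le_sum (fun j _ => Nat.zero_le (f j)) hi)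
  calc ∑ i ∈ s, (f i)^2 ≤ ∑ i ∈ s, f i * ∑ j ∈ s, f j := Finset.sum_le_sum h
  _ = (∑ i ∈ s, f i)^2 := by rw [← Finset.sum_mul, pow_two]

lemma one_le_deg {n : ℕ} (G : SimpleGraph (Fin n)) (hconn : G.Connected) (hn : 2 ≤ n)
    (v : Fin n) : 1 ≤ deg G v := by
  have h0 : (0:ℕ) < n := by omega
  have h1 : (1:ℕ) < n := by omega
  set u : Fin n := if v = ⟨0, h0⟩ then ⟨1, h1⟩ else ⟨0, h0⟩ with hu
  have hvu : v ≠ u := by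
    by_cases h : v = ⟨0, h0⟩ <;> simp [hu, h, Fin.ext_iff] <;> omega
  obtain ⟨p⟩ := hconn.preconnected v u
  have hnil : ¬ p.Nil := by
    intro hc
    exact hvu (SimpleGraph.Walk.Nil.eq hc)
  have hadj : G.Adj v (p.getVert 1) := p.adj_snd hnil
  rw [deg, Nat.card_eq_fintype_card]
  exact Fintype.card_pos_iff.2 ⟨⟨_, hadj⟩⟩

lemma cycleLength_le {V : Type*} [Fintype V] (G : SimpleGraph V) :
    cycleLength G ≤ Fintype.card V := by
  rw [cycleLength, Nat.card_eq_fintype_card]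
  exact Fintype.card_subtype_le _

lemma g_deg_sq_bound {n : ℕ} (G : SimpleGraph (Fin n)) (hG : IsCycleStar G)
    (hc4 : 4 ≤ cycleLength G) :
    ∑ v, (deg G v : ℝ)^2 ≤ (n:ℝ)^2 - 3*n + 12 := by
  have hn : 4 ≤ n := le_trans hc4 (by simpa using cycleLength_le G)
  obtain ⟨⟨hconn, hedge⟩, hstar⟩ := hG
  set S := Finset.univ.filter (fun v : Fin n => OnCycle G v) with hS
  have hcS : cycleLength G = S.card := by
    rw [cycleLength, Nat.card_eq_fintype_card, Fintype.card_subtype]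
  set c := S.card with hc
  have hc4' : 4 ≤ c := by rw [← hcS]; exact hc4
  have hcn : c ≤ n := by
    calc c ≤ Finset.univ.card := Finset.card_le_univ S
    _ = n := by simp
  have h2 : ∀ v ∈ S, 2 ≤ deg G v := by
    intro v hv
    rw [hS, Finset.mem_filter] at hv
    exact two_le_deg_of_onCycle hv.2
  have h1 : ∀ v : Fin n, 1 ≤ deg G v := one_le_deg G hconn (by omega)
  have hout : ∀ v ∈ Finset.univ.filter (fun v : Fin n => ¬ OnCycle G v), deg G v = 1 := by
    intro v hv
    rw [Finset.mem_filter] at hv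
    have : ¬ 2 ≤ deg G v := fun h => hv.2 (hstar v h)
    have := h1 v
    omega
  have hsumdeg : ∑ v, deg G v = 2 * n := by
    rw [sum_deg, hedge, Fintype.card_fin]
  -- split the sum
  have hsplit := Finset.sum_filter_add_sum_filter_not Finset.univ
    (fun v : Fin n => OnCycle G v) (fun v => deg G v)
  have hsplitsq := Finset.sum_filter_add_sum_filter_not Finset.univ
    (fun v : Fin n => OnCycle G v) (fun v => (deg G v)^2)
  rw [← hS] at hsplit hsplitsq
  have houtcard : (Finset.univ.filter (fun v : Fin n => ¬ OnCycle G v)).card = n - c := by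
    rw [Finset.filter_not, Finset.card_sdiff_of_subset (Finset.filter_subset _ _), Finset.card_univ,
      Fintype.card_fin]
  have houtsum : ∑ v ∈ Finset.univ.filter (fun v : Fin n => ¬ OnCycle G v), deg G v = n - c := by
    rw [Finset.sum_congr rfl hout, Finset.sum_const, houtcard, smul_eq_mul, mul_one]

  have houtsumsq : ∑ v ∈ Finset.univ.filter (fun v : Fin n => ¬ OnCycle G v), (deg G v)^2
      = n - c := by
    have hone : ∀ v ∈ Finset.univ.filter (fun v : Fin n => ¬ OnCycle G v), (deg G v)^2 = 1 := by
      intro v hv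
      rw [hout v hv, one_pow]
    rw [Finset.sum_congr rfl hone, Finset.sum_const, houtcard, smul_eq_mul, mul_one]
  have hSsum : ∑ v ∈ S, deg G v = n + c := by omega
  have hdecomp : ∀ v ∈ S, deg G v = (deg G v - 2) + 2 := fun v hv => by
    have := h2 v hv; omega
  have hesum : ∑ v ∈ S, (deg G v - 2) = n - c := by
    have he : ∑ v ∈ S, deg G v = ∑ v ∈ S, ((deg G v - 2) + 2) := Finset.sum_congr rfl hdecomp
    rw [Finset.sum_add_distrib, Finset.sum_const, smul_eq_mul] at he
    omega
  have hterm : ∀ v ∈ S, (deg G v)^2 = (deg G v - 2)^2 + 4*(deg G v - 2) + 4 := by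
    intro v hv
    obtain ⟨k, hk⟩ := Nat.exists_eq_add_of_le (h2 v hv)
    rw [hk]
    simp only [Nat.add_sub_cancel_left]
    ring
  have hsqS : ∑ v ∈ S, (deg G v)^2 ≤ (n - c)^2 + 4*(n - c) + 4*c := by
    rw [Finset.sum_congr rfl hterm]
    rw [Finset.sum_add_distrib, Finset.sum_add_distrib, Finset.sum_const, smul_eq_mul,
      ← Finset.mul_sum, hesum]
    have := sq_sum_le S (fun v => deg G v - 2)
    rw [hesum] at this
    omega
  have htotal : ∑ v, (deg G v)^2 ≤ (n - c)^2 + 4*n + (n - c) := by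
    have h4 : 4*(n - c) + 4*c = 4*n := by omega
    omega
  -- cast to ℝ
  have hcast : ∑ v, (deg G v : ℝ)^2 = ((∑ v, (deg G v)^2 : ℕ) : ℝ) := by
    push_cast
    rfl
  rw [hcast]
  have hk4 : n - c ≤ n - 4 := by omega
  have hkr : ((n - c : ℕ) : ℝ) ≤ (n:ℝ) - 4 := by
    have h4 : ((n - 4 : ℕ) : ℝ) = (n:ℝ) - 4 := by
      push_cast [Nat.cast_sub (by omega : 4 ≤ n)]
      ring
    calc ((n - c : ℕ) : ℝ) ≤ ((n - 4 : ℕ) : ℝ) := by exact_mod_cast hk4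
    _ = (n:ℝ) - 4 := h4
  have hkr0 : (0:ℝ) ≤ ((n - c : ℕ) : ℝ) := Nat.cast_nonneg _
  have hb : ((∑ v, (deg G v)^2 : ℕ) : ℝ) ≤ ((n-c:ℕ):ℝ)^2 + 4*n + ((n-c:ℕ):ℝ) := by
    have := htotal
    exact_mod_cast this
  have hnr : (4:ℝ) ≤ (n:ℝ) := by exact_mod_cast hn
  nlinarith [hb, hkr, hkr0, hnr]

theorem stmt13 (n : ℕ) (G : SimpleGraph (Fin n)) (hG : IsCycleStar G)
    (hc : 4 ≤ cycleLength G) :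
    ∃ G' : SimpleGraph (Fin n), IsCycleStar G' ∧ cycleLength G' = 3 ∧ HA G < HA G' := by
  have hn : 4 ≤ n := le_trans hc (by simpa using cycleLength_le G)
  refine ⟨cycleStar3 n, cs3_isCycleStar hn, cs3_cycleLength hn, ?_⟩
  have h3 := g_deg_sq_bound G hG hc
  obtain ⟨⟨hconn, hedge⟩, _⟩ := hG
  have hsumG : ∑ v, (deg G v : ℝ) = 2 * n := by
    have h := sum_deg G
    rw [hedge, Fintype.card_fin] at h
    have h2 : ((∑ v, deg G v : ℕ) : ℝ) = ((2 * n : ℕ) : ℝ) := by rw [h]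
    push_cast at h2
    convert h2 using 1
  have h1 := HA_le_of G hconn hsumG
  have h2 := HA_ge_of (cycleStar3 n) (cs3_connected hn) (cs3_sum_deg hn)
    (fun u v h => cs3_dist_le_two hn u v h)
  rw [cs3_sum_deg_sq hn] at h2
  have hnr : (4:ℝ) ≤ (n:ℝ) := by exact_mod_cast hn
  linarith
end
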